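/- arXiv:2109.10766 — 2 statements merged into one kernel-verified Lean document; each statement's English description precedes it below -/
import Mathlib

section
/- Let g be a (right) Leibniz algebra over a field k of characteristic zero. For every n ≥ 1, every X ∈ L_n and every y ∈ g, the element X·y (diagonal right action) again lies in L_n. -/
open scoped TensorProduct

/-- The pure tensor `x 0 ⊗ x 1 ⊗ ... ⊗ x (n-1)`, viewed inside the tensor algebra
`T(g) = ⊕ₙ g^{⊗n}`. -/
noncomputable def pt (k : Type*) [CommSemiring k] {g : Type*} [AddCommMonoid g] [Module k g]
    {n : ℕ} (x : Fin n → g) : TensorAlgebra k g :=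
  (List.ofFn fun i => TensorAlgebra.ι k (x i)).prod

/-- The degree-`n` component `g^{⊗n}` of the tensor algebra: the span of the pure tensors of
length `n`. -/
noncomputable def tensorGrade (k : Type*) [CommSemiring k] (g : Type*) [AddCommMonoid g]
    [Module k g] (n : ℕ) : Submodule k (TensorAlgebra k g) :=
  Submodule.span k {z | ∃ x : Fin n → g, z = pt k x}

lemma pt_snoc (k : Type*) [CommSemiring k] {g : Type*} [AddCommMonoid g] [Module k g]
    {n : ℕ} (x : Fin n → g) (z : g) :
    pt k (Fin.snoc x z) = pt k x * TensorAlgebra.ι k z := by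
  rw [pt, pt, List.ofFn_succ' (fun i => TensorAlgebra.ι k (Fin.snoc x z i))]
  simp [Fin.snoc_castSucc, Fin.snoc_last]

lemma pt_cons (k : Type*) [CommSemiring k] {g : Type*} [AddCommMonoid g] [Module k g]
    {n : ℕ} (x : Fin n → g) (z : g) :
    pt k (Fin.cons z x) = TensorAlgebra.ι k z * pt k x := by
  rw [pt, pt, List.ofFn_succ (f := fun i => TensorAlgebra.ι k (Fin.cons z x i))]
  simp

lemma grade_mem_iff (k : Type*) [CommSemiring k] {g : Type*} [AddCommMonoid g] [Module k g]
    {n : ℕ} {X : TensorAlgebra k g} :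
    X ∈ tensorGrade k g n ↔ X ∈ Submodule.span k {z | ∃ x : Fin n → g, z = pt k x} :=
  Iff.rfl

lemma mul_iota_mem_grade (k : Type*) [CommSemiring k] {g : Type*} [AddCommMonoid g] [Module k g]
    {n : ℕ} {X : TensorAlgebra k g} (hX : X ∈ tensorGrade k g n) (z : g) :
    X * TensorAlgebra.ι k z ∈ tensorGrade k g (n + 1) := by
  rw [grade_mem_iff] at hX
  induction hX using Submodule.span_induction with
  | mem w hw =>
    obtain ⟨x, rfl⟩ := hw
    rw [← pt_snoc]
    exact Submodule.subset_span ⟨_, rfl⟩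
  | zero => simpa using (tensorGrade k g (n + 1)).zero_mem
  | add a b _ _ ha hb => rw [add_mul]; exact add_mem ha hb
  | smul c a _ ha => rw [smul_mul_assoc]; exact Submodule.smul_mem _ _ ha

lemma iota_mul_mem_grade (k : Type*) [CommSemiring k] {g : Type*} [AddCommMonoid g] [Module k g]
    {n : ℕ} {X : TensorAlgebra k g} (hX : X ∈ tensorGrade k g n) (z : g) :
    TensorAlgebra.ι k z * X ∈ tensorGrade k g (n + 1) := by
  rw [grade_mem_iff] at hX
  induction hX using Submodule.span_induction with
  | mem w hw =>
    obtain ⟨x, rfl⟩ := hw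
    rw [← pt_cons]
    exact Submodule.subset_span ⟨_, rfl⟩
  | zero => simpa using (tensorGrade k g (n + 1)).zero_mem
  | add a b _ _ ha hb => rw [mul_add]; exact add_mem ha hb
  | smul c a _ ha => rw [mul_smul_comm]; exact Submodule.smul_mem _ _ ha

section Deriv

variable {k : Type*} [Field k] {g : Type*} [AddCommGroup g] [Module k g]
    (mul : g →ₗ[k] g →ₗ[k] g)
    (act : TensorAlgebra k g →ₗ[k] g →ₗ[k] TensorAlgebra k g)
    (hact : ∀ (n : ℕ) (x : Fin n → g) (y : g),
      act (pt k x) y = ∑ i : Fin n, pt k (Function.update x i (mul (x i) y)))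

include hact in
lemma act_mul_iota {n : ℕ} {X : TensorAlgebra k g} (hX : X ∈ tensorGrade k g n) (z y : g) :
    act (X * TensorAlgebra.ι k z) y
      = act X y * TensorAlgebra.ι k z + X * TensorAlgebra.ι k (mul z y) := by
  rw [grade_mem_iff] at hX
  induction hX using Submodule.span_induction with
  | mem w hw =>
    obtain ⟨x, rfl⟩ := hw
    rw [← pt_snoc, hact, hact, Fin.sum_univ_castSucc]
    congr 1
    · rw [Finset.sum_mul]
      refine Finset.sum_congr rfl fun i _ => ?_
      rw [Fin.snoc_castSucc, ← Fin.snoc_update, pt_snoc]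
    · rw [Fin.snoc_last, Fin.update_snoc_last, pt_snoc]
  | zero => simp
  | add a b _ _ ha hb =>
    rw [add_mul, map_add, LinearMap.add_apply, ha, hb, map_add, LinearMap.add_apply,
      add_mul, add_mul]
    abel
  | smul c a _ ha =>
    rw [smul_mul_assoc, map_smul, LinearMap.smul_apply, ha, map_smul, LinearMap.smul_apply,
      smul_add, smul_mul_assoc, smul_mul_assoc]

include hact in
lemma act_iota_mul {n : ℕ} {X : TensorAlgebra k g} (hX : X ∈ tensorGrade k g n) (z y : g) :
    act (TensorAlgebra.ι k z * X) y
      = TensorAlgebra.ι k (mul z y) * X + TensorAlgebra.ι k z * act X y := by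
  rw [grade_mem_iff] at hX
  induction hX using Submodule.span_induction with
  | mem w hw =>
    obtain ⟨x, rfl⟩ := hw
    rw [← pt_cons, hact, hact, Fin.sum_univ_succ]
    congr 1
    · rw [Fin.cons_zero, Fin.update_cons_zero, pt_cons]
    · rw [Finset.mul_sum]
      refine Finset.sum_congr rfl fun i _ => ?_
      rw [Fin.cons_succ, ← Fin.cons_update, pt_cons]
  | zero => simp
  | add a b _ _ ha hb =>
    rw [mul_add, map_add, LinearMap.add_apply, ha, hb, map_add, LinearMap.add_apply,
      mul_add, mul_add]
    abel
  | smul c a _ ha =>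
    rw [mul_smul_comm, map_smul, LinearMap.smul_apply, ha, map_smul, LinearMap.smul_apply,
      smul_add, mul_smul_comm, mul_smul_comm]

end Deriv

/-- for a (right) Leibniz algebra `g` over a field `k` of characteristic zero,
the subspaces `L n` (model for `Lie_n(sg) ⊆ g^{⊗n}`) are stable under the diagonal right
action of `g`: for `n ≥ 1`, `X ∈ L n` and `y ∈ g`, `X·y ∈ L n`.
Here `act` is the (total) diagonal right action, determined on pure tensors by
`(x₁⊗…⊗xₙ)·y = Σᵢ x₁⊗…⊗(xᵢy)⊗…⊗xₙ`. -/
theorem primitives_stable_under_diagonal_action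
    {k : Type*} [Field k] [CharZero k]
    {g : Type*} [AddCommGroup g] [Module k g]
    (mul : g →ₗ[k] g →ₗ[k] g)
    (hleib : ∀ x y z : g, mul x (mul y z) = mul (mul x y) z - mul (mul x z) y)
    (act : TensorAlgebra k g →ₗ[k] g →ₗ[k] TensorAlgebra k g)
    (hact : ∀ (n : ℕ) (x : Fin n → g) (y : g),
      act (pt k x) y = ∑ i : Fin n, pt k (Function.update x i (mul (x i) y)))
    (L : ℕ → Submodule k (TensorAlgebra k g))
    (hL1 : L 1 = tensorGrade k g 1)
    (hLsucc : ∀ n : ℕ, 1 ≤ n → L (n + 1) =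
      Submodule.span k {z | ∃ X ∈ L n, ∃ y : g,
        z = X * TensorAlgebra.ι k y - ((-1 : k) ^ n) • (TensorAlgebra.ι k y * X)})
    (n : ℕ) (X : TensorAlgebra k g) (hX : X ∈ L (n + 1)) (y : g) :
    act X y ∈ L (n + 1) := by
  -- strengthened statement, proved by induction on n
  suffices H : ∀ m : ℕ, ∀ Z ∈ L (m + 1),
      Z ∈ tensorGrade k g (m + 1) ∧ ∀ w : g, act Z w ∈ L (m + 1) by
    exact (H n X hX).2 y
  intro m
  induction m with
  | zero =>
    intro Z hZ
    rw [hL1] at hZ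
    refine ⟨hZ, fun w => ?_⟩
    show act Z w ∈ L 1
    rw [hL1]
    rw [grade_mem_iff] at hZ
    induction hZ using Submodule.span_induction with
    | mem v hv =>
      obtain ⟨x, rfl⟩ := hv
      rw [hact, Fin.sum_univ_one]
      exact Submodule.subset_span ⟨_, rfl⟩
    | zero => simp
    | add a b _ _ ha hb =>
      rw [map_add, LinearMap.add_apply]; exact add_mem ha hb
    | smul c a _ ha =>
      rw [map_smul, LinearMap.smul_apply]; exact Submodule.smul_mem _ _ ha
  | succ m ih =>
    intro Z hZ
    have hsp : Z ∈ Submodule.span k {z | ∃ X ∈ L (m + 1), ∃ y : g,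
        z = X * TensorAlgebra.ι k y - ((-1 : k) ^ (m + 1)) • (TensorAlgebra.ι k y * X)} := by
      rwa [hLsucc (m + 1) (Nat.le_add_left 1 m)] at hZ
    clear hZ
    have gen_mem : ∀ (W : TensorAlgebra k g), W ∈ L (m + 1) → ∀ v : g,
        W * TensorAlgebra.ι k v - ((-1 : k) ^ (m + 1)) • (TensorAlgebra.ι k v * W)
          ∈ L (m + 1 + 1) := by
      intro W hW v
      rw [hLsucc (m + 1) (Nat.le_add_left 1 m)]
      exact Submodule.subset_span ⟨W, hW, v, rfl⟩
    induction hsp using Submodule.span_induction with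
    | mem w hw =>
      obtain ⟨W, hW, z, rfl⟩ := hw
      obtain ⟨hWg, hWa⟩ := ih W hW
      constructor
      · exact sub_mem (mul_iota_mem_grade k hWg z)
          (Submodule.smul_mem _ _ (iota_mul_mem_grade k hWg z))
      · intro v
        have e1 := act_mul_iota mul act hact hWg z v
        have e2 := act_iota_mul mul act hact hWg z v
        have expand : act (W * TensorAlgebra.ι k z
              - ((-1 : k) ^ (m + 1)) • (TensorAlgebra.ι k z * W)) v
            = (act W v * TensorAlgebra.ι k z
                - ((-1 : k) ^ (m + 1)) • (TensorAlgebra.ι k z * act W v))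
              + (W * TensorAlgebra.ι k (mul z v)
                - ((-1 : k) ^ (m + 1)) • (TensorAlgebra.ι k (mul z v) * W)) := by
          rw [map_sub, map_smul, LinearMap.sub_apply, LinearMap.smul_apply, e1, e2, smul_add]
          abel
        rw [expand]
        exact add_mem (gen_mem _ (hWa v) z) (gen_mem _ hW (mul z v))
    | zero => exact ⟨zero_mem _, fun v => by simp⟩
    | add a b _ _ ha hb =>
      refine ⟨add_mem ha.1 hb.1, fun v => ?_⟩
      rw [map_add, LinearMap.add_apply]
      exact add_mem (ha.2 v) (hb.2 v)
    | smul c a _ ha =>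
      refine ⟨Submodule.smul_mem _ _ ha.1, fun v => ?_⟩
      rw [map_smul, LinearMap.smul_apply]
      exact Submodule.smul_mem _ _ (ha.2 v)
end

section
/- Let g be a (right) Leibniz algebra over a field k of characteristic zero. Then the image of L_2 under the Leibniz differential d_2 : g^{⊗2} → g equals the Leibniz kernel K. Consequently the degree-one homology of the Pirashvili complex, namely the cokernel of d_2 restricted to L_2 (note d_1 = 0), is isomorphic as a k-vector space to g_Lie = g/K. -/
open scoped TensorProduct

lemma pt_one {k : Type*} [CommSemiring k] {g : Type*} [AddCommMonoid g] [Module k g]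
    (x : Fin 1 → g) : pt k x = TensorAlgebra.ι k (x 0) := by
  simp [pt, List.ofFn_succ]

lemma pt_two {k : Type*} [CommSemiring k] {g : Type*} [AddCommMonoid g] [Module k g]
    (x : Fin 2 → g) : pt k x = TensorAlgebra.ι k (x 0) * TensorAlgebra.ι k (x 1) := by
  simp [pt, List.ofFn_succ, mul_assoc]

lemma tensorGrade_one_eq {k : Type*} [CommSemiring k] (g : Type*) [AddCommMonoid g]
    [Module k g] : tensorGrade k g 1 = LinearMap.range (TensorAlgebra.ι k (M := g)) := by
  apply le_antisymm
  · rw [tensorGrade, Submodule.span_le]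
    rintro z ⟨x, rfl⟩
    exact ⟨x 0, (pt_one x).symm⟩
  · rintro z ⟨x, rfl⟩
    refine Submodule.subset_span ⟨fun _ => x, ?_⟩
    rw [pt_one]

lemma D_mul {k : Type*} [Field k] {g : Type*} [AddCommGroup g] [Module k g]
    (mul : g →ₗ[k] g →ₗ[k] g)
    (D : TensorAlgebra k g →ₗ[k] TensorAlgebra k g)
    (hD : ∀ (m : ℕ) (x : Fin (m + 1) → g),
      D (pt k x) = ∑ j : Fin (m + 1),
        ∑ i ∈ Finset.univ.filter (fun i : Fin m => i.castSucc < j),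
          ((-1 : k) ^ (j : ℕ)) •
            pt k (Function.update (fun a : Fin m => x (j.succAbove a)) i
              (mul (x i.castSucc) (x j))))
    (x y : g) :
    D (TensorAlgebra.ι k x * TensorAlgebra.ι k y) = - TensorAlgebra.ι k (mul x y) := by
  have hp : TensorAlgebra.ι k x * TensorAlgebra.ι k y = pt k ![x, y] := by
    rw [pt_two]; simp
  rw [hp, hD 1, Fin.sum_univ_two]
  have h0 : (Finset.univ.filter (fun i : Fin 1 => i.castSucc < (0 : Fin 2))) = ∅ := by decide
  have h1 : (Finset.univ.filter (fun i : Fin 1 => i.castSucc < (1 : Fin 2))) = Finset.univ := by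
    decide
  rw [h0, h1, Finset.sum_empty, Fin.sum_univ_one]
  simp [pt, List.ofFn_succ]

/-- for a (right) Leibniz algebra `g` over a field `k` of characteristic zero,
the image of `L 2` under the Leibniz differential `d₂ : g^{⊗2} → g` equals the Leibniz
kernel `K` (both viewed inside the degree-`1` part of the tensor algebra via `ι`), and
consequently the degree-one homology of the Pirashvili complex — the cokernel of
`d₂ : L 2 → g^{⊗1}` — is isomorphic as a `k`-vector space to `g_Lie = g ⧸ K`. -/
theorem pirashvili_degree_one_homology
    {k : Type*} [Field k] [CharZero k]
    {g : Type*} [AddCommGroup g] [Module k g]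
    (mul : g →ₗ[k] g →ₗ[k] g)
    (hleib : ∀ x y z : g, mul x (mul y z) = mul (mul x y) z - mul (mul x z) y)
    (D : TensorAlgebra k g →ₗ[k] TensorAlgebra k g)
    (hD : ∀ (m : ℕ) (x : Fin (m + 1) → g),
      D (pt k x) = ∑ j : Fin (m + 1),
        ∑ i ∈ Finset.univ.filter (fun i : Fin m => i.castSucc < j),
          ((-1 : k) ^ (j : ℕ)) •
            pt k (Function.update (fun a : Fin m => x (j.succAbove a)) i
              (mul (x i.castSucc) (x j))))
    (L : ℕ → Submodule k (TensorAlgebra k g))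
    (hL1 : L 1 = tensorGrade k g 1)
    (hLsucc : ∀ n : ℕ, 1 ≤ n → L (n + 1) =
      Submodule.span k {z | ∃ X ∈ L n, ∃ y : g,
        z = X * TensorAlgebra.ι k y - ((-1 : k) ^ n) • (TensorAlgebra.ι k y * X)})
    (K : Submodule k g)
    (hK : K = Submodule.span k {w : g | ∃ x : g, w = mul x x}) :
    Submodule.map D (L 2) = Submodule.map (TensorAlgebra.ι k) K ∧
    Nonempty
      ((↥(tensorGrade k g 1) ⧸
          (Submodule.map D (L 2)).comap (tensorGrade k g 1).subtype) ≃ₗ[k] (g ⧸ K)) := by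
  have hι : Function.Injective (TensorAlgebra.ι k (M := g)) :=
    fun a b h => (TensorAlgebra.ι_inj k a b).mp h
  have hDmul := D_mul mul D hD
  have hsq : ∀ x : g, mul x x ∈ K := fun x => hK ▸ Submodule.subset_span ⟨x, rfl⟩
  have hKmem : ∀ x y : g, mul x y + mul y x ∈ K := by
    intro x y
    have h : mul x y + mul y x = mul (x + y) (x + y) - mul x x - mul y y := by
      simp only [map_add, LinearMap.add_apply]
      abel
    rw [h]
    exact Submodule.sub_mem _ (Submodule.sub_mem _ (hsq _) (hsq _)) (hsq _)
  have hmain : Submodule.map D (L 2) = Submodule.map (TensorAlgebra.ι k) K := by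
    apply le_antisymm
    · rw [hLsucc 1 le_rfl, Submodule.map_span, Submodule.span_le]
      rintro _ ⟨z, ⟨X, hX, y, rfl⟩, rfl⟩
      rw [hL1, tensorGrade_one_eq] at hX
      obtain ⟨x, rfl⟩ := hX
      have hz : TensorAlgebra.ι k x * TensorAlgebra.ι k y -
          ((-1 : k) ^ 1) • (TensorAlgebra.ι k y * TensorAlgebra.ι k x) =
          TensorAlgebra.ι k x * TensorAlgebra.ι k y +
          TensorAlgebra.ι k y * TensorAlgebra.ι k x := by
        simp [sub_neg_eq_add]
      rw [hz, map_add, hDmul, hDmul]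
      exact ⟨-(mul x y + mul y x), Submodule.neg_mem _ (hKmem x y), by simp [map_add]; abel⟩
    · rw [hK, Submodule.map_span, Submodule.span_le]
      rintro _ ⟨w, ⟨x, rfl⟩, rfl⟩
      set z := TensorAlgebra.ι k x * TensorAlgebra.ι k x -
        ((-1 : k) ^ 1) • (TensorAlgebra.ι k x * TensorAlgebra.ι k x) with hzdef
      have hzL : z ∈ L 2 := by
        rw [hLsucc 1 le_rfl]
        exact Submodule.subset_span
          ⟨TensorAlgebra.ι k x, by rw [hL1, tensorGrade_one_eq]; exact ⟨x, rfl⟩, x, rfl⟩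
      have hz2 : z = (2 : k) • (TensorAlgebra.ι k x * TensorAlgebra.ι k x) := by
        rw [hzdef, two_smul]; simp [sub_neg_eq_add]
      refine ⟨(-(2 : k))⁻¹ • z, Submodule.smul_mem _ _ hzL, ?_⟩
      have hDz : D z = (-(2 : k)) • TensorAlgebra.ι k (mul x x) := by
        rw [hz2, map_smul, hDmul]
        simp
      rw [map_smul, hDz, smul_smul, inv_mul_cancel₀ (by norm_num : (-(2 : k)) ≠ 0), one_smul]
  refine ⟨hmain, ?_⟩
  rw [hmain]
  let e : g ≃ₗ[k] ↥(tensorGrade k g 1) :=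
    (LinearEquiv.ofInjective _ hι).trans (LinearEquiv.ofEq _ _ (tensorGrade_one_eq g).symm)
  have he : ∀ x : g, (e x : TensorAlgebra k g) = TensorAlgebra.ι k x := fun x => rfl
  have hmapK : Submodule.map (e : g →ₗ[k] ↥(tensorGrade k g 1)) K =
      (Submodule.map (TensorAlgebra.ι k) K).comap (tensorGrade k g 1).subtype := by
    ext z
    simp only [Submodule.mem_map, Submodule.mem_comap, Submodule.subtype_apply, LinearEquiv.coe_coe]
    constructor
    · rintro ⟨x, hx, rfl⟩
      exact ⟨x, hx, (he x).symm⟩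
    · rintro ⟨x, hx, hxz⟩
      exact ⟨x, hx, Subtype.ext (by rw [he, hxz])⟩
  exact ⟨(Submodule.Quotient.equiv K _ e hmapK).symm⟩
end
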